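/- Let d ≥ 1 and let f : ℝ^d → ℝ be a bounded measurable function with f(y) ≥ 0 for all y, 0 < ∫_{ℝ^d} f(y) dy < ∞, and f(-y) = f(y) for all y ∈ ℝ^d. Let g : ℝ^d → ℝ be another bounded measurable function with g ≥ 0 and ∫_{ℝ^d} g(y) dy > 0. Then for every x ∈ ℝ^d there exists n ∈ ℕ (n ≥ 1) such that (f^{*n} * g)(x) > 0. -/

import Mathlib

open scoped ENNReal
open Pointwise Metric


open MeasureTheory

/-- Convolution `(f*g)(x) = ∫ f(x-y) g(y) dy` on Euclidean space. -/
noncomputable def conv {d : ℕ} (f g : EuclideanSpace ℝ (Fin d) → ℝ)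
    (x : EuclideanSpace ℝ (Fin d)) : ℝ :=
  ∫ y, f (x - y) * g y

/-- Auxiliary convolution iterates: `convIter f k = f^{*(k+1)}`. -/
noncomputable def convIter {d : ℕ} (f : EuclideanSpace ℝ (Fin d) → ℝ) :
    ℕ → EuclideanSpace ℝ (Fin d) → ℝ
  | 0 => f
  | n + 1 => fun x => conv (convIter f n) f x

/-- `convPow f n` is the `n`-fold convolution power `f^{*n}` (meaningful for `n ≥ 1`):
`f^{*1} = f` and `f^{*(n+1)} = f^{*n} * f`. -/
noncomputable def convPow {d : ℕ} (f : EuclideanSpace ℝ (Fin d) → ℝ) (n : ℕ) :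
    EuclideanSpace ℝ (Fin d) → ℝ :=
  convIter f (n - 1)

namespace ConvPowAux

variable {d : ℕ}

local notation "E" => EuclideanSpace ℝ (Fin d)

/-- `ℝ≥0∞`-valued convolution iterates. -/
noncomputable def lIter (F : E → ℝ≥0∞) : ℕ → E → ℝ≥0∞
  | 0 => F
  | n + 1 => fun x => ∫⁻ y, lIter F n (x - y) * F y

lemma lIter_succ (F : E → ℝ≥0∞) (n : ℕ) (x : E) :
    lIter F (n + 1) x = ∫⁻ y, lIter F n (x - y) * F y := rfl

lemma lIter_measurable {F : E → ℝ≥0∞} (hF : Measurable F) (n : ℕ) :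
    Measurable (lIter F n) := by
  induction n with
  | zero => exact hF
  | succ n ih =>
    have h : Measurable fun p : E × E => lIter F n (p.1 - p.2) * F p.2 :=
      (ih.comp (measurable_fst.sub measurable_snd)).mul (hF.comp measurable_snd)
    exact h.lintegral_prod_right'

lemma lIter_joint_measurable {F : E → ℝ≥0∞} (hF : Measurable F) (n : ℕ) :
    Measurable fun p : E × E => lIter F n (p.1 - p.2) * F p.2 :=
  ((lIter_measurable hF n).comp (measurable_fst.sub measurable_snd)).mul (hF.comp measurable_snd)

lemma lIter_le {F : E → ℝ≥0∞} (hF : Measurable F) {C : ℝ≥0∞} (hC : ∀ y, F y ≤ C)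
    (n : ℕ) (x : E) : lIter F n x ≤ C * (∫⁻ y, F y) ^ n := by
  induction n generalizing x with
  | zero => simpa [lIter] using hC x
  | succ n ih =>
    calc lIter F (n + 1) x = ∫⁻ y, lIter F n (x - y) * F y := rfl
      _ ≤ ∫⁻ y, (C * (∫⁻ y, F y) ^ n) * F y :=
          lintegral_mono fun y => mul_le_mul' (ih _) le_rfl
      _ = (C * (∫⁻ y, F y) ^ n) * ∫⁻ y, F y := lintegral_const_mul _ hF
      _ = C * (∫⁻ y, F y) ^ (n + 1) := by rw [pow_succ, mul_assoc]

/-- Shift invariance: `∫⁻ y, h (x - y) = ∫⁻ h`. -/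
lemma lintegral_comp_sub {h : E → ℝ≥0∞} (hh : Measurable h) (x : E) :
    ∫⁻ y, h (x - y) = ∫⁻ y, h y := by
  calc ∫⁻ y, h (x - y) = ∫⁻ y, (fun z => h (x + z)) (-y) := by simp [sub_eq_add_neg]
    _ = ∫⁻ y, h (x + y) :=
        (Measure.measurePreserving_neg (volume : Measure E)).lintegral_comp
          (hh.comp (measurable_const_add x))
    _ = ∫⁻ y, h y := lintegral_add_left_eq_self h x

lemma lintegral_lIter {F : E → ℝ≥0∞} (hF : Measurable F) (n : ℕ) :
    ∫⁻ x, lIter F n x = (∫⁻ y, F y) ^ (n + 1) := by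
  induction n with
  | zero => simp [lIter]
  | succ n ih =>
    calc ∫⁻ x, lIter F (n + 1) x = ∫⁻ x, ∫⁻ y, lIter F n (x - y) * F y := rfl
      _ = ∫⁻ y, ∫⁻ x, lIter F n (x - y) * F y :=
          lintegral_lintegral_swap (lIter_joint_measurable hF n).aemeasurable
      _ = ∫⁻ y, (∫⁻ x, lIter F n (x - y)) * F y := by
          refine lintegral_congr fun y => ?_
          exact lintegral_mul_const _ ((lIter_measurable hF n).comp (measurable_sub_const y))
      _ = ∫⁻ y, ((∫⁻ x, lIter F n x) * F y) := by
          refine lintegral_congr fun y => ?_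
          rw [lintegral_sub_right_eq_self (lIter F n) y]
      _ = (∫⁻ x, lIter F n x) * ∫⁻ y, F y := lintegral_const_mul _ hF
      _ = (∫⁻ y, F y) ^ (n + 2) := by rw [ih]; ring

/-- Associativity: two more iterations is convolution with `lIter F 1`. -/
lemma lIter_add_two {F : E → ℝ≥0∞} (hF : Measurable F) (n : ℕ) (z : E) :
    lIter F (n + 2) z = ∫⁻ u, lIter F n (z - u) * lIter F 1 u := by
  symm
  have hmeas2 : Measurable fun p : E × E =>
      lIter F n (z - p.1) * (F (p.1 - p.2) * F p.2) :=
    ((lIter_measurable hF n).comp (measurable_const.sub measurable_fst)).mul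
      (((hF.comp (measurable_fst.sub measurable_snd))).mul (hF.comp measurable_snd))
  calc ∫⁻ u, lIter F n (z - u) * lIter F 1 u
      = ∫⁻ u, ∫⁻ v, lIter F n (z - u) * (F (u - v) * F v) := by
        refine lintegral_congr fun u => ?_
        rw [lIter_succ]
        exact (lintegral_const_mul _
          ((hF.comp (measurable_const_sub u)).mul hF)).symm
    _ = ∫⁻ v, ∫⁻ u, lIter F n (z - u) * (F (u - v) * F v) :=
        lintegral_lintegral_swap hmeas2.aemeasurable
    _ = ∫⁻ v, (∫⁻ u, lIter F n (z - u) * F (u - v)) * F v := by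
        refine lintegral_congr fun v => ?_
        have hm3 : Measurable fun u => lIter F n (z - u) * F (u - v) :=
          ((lIter_measurable hF n).comp (measurable_const_sub z)).mul
            (hF.comp (measurable_sub_const v))
        rw [← lintegral_mul_const _ hm3]
        exact lintegral_congr fun u => (mul_assoc _ _ _).symm
    _ = ∫⁻ v, (∫⁻ u, lIter F n ((z - v) - u) * F u) * F v := by
        refine lintegral_congr fun v => ?_
        congr 1
        calc ∫⁻ u, lIter F n (z - u) * F (u - v)
            = ∫⁻ u, lIter F n (z - (u + v)) * F ((u + v) - v) :=
              (lintegral_add_right_eq_self (fun u => lIter F n (z - u) * F (u - v)) v).symm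
          _ = ∫⁻ u, lIter F n ((z - v) - u) * F u := by
              refine lintegral_congr fun u => ?_
              congr 2
              · abel
              · abel
    _ = ∫⁻ v, lIter F (n + 1) (z - v) * F v := by
        refine lintegral_congr fun v => ?_
        rw [lIter_succ]
    _ = lIter F (n + 2) z := (lIter_succ F (n + 1) z).symm

/-- A nonnegative measurable function positive on a set of positive measure has positive
lintegral. -/
lemma pos_of_posset {h : E → ℝ≥0∞} (hh : Measurable h) {s : Set E}
    (hs : 0 < volume s) (hpos : ∀ y ∈ s, h y ≠ 0) : 0 < ∫⁻ y, h y := by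
  rw [pos_iff_ne_zero]
  intro h0
  have hae : h =ᵐ[volume] 0 := (lintegral_eq_zero_iff hh).mp h0
  have h0' : volume {y | ¬ h y = 0} = 0 := by
    exact ae_iff.mp hae
  have : volume s = 0 := measure_mono_null (fun y hy => hpos y hy) h0'
  exact hs.ne' this

/-- Converting a convolution-type Bochner integral to a Lebesgue integral. -/
lemma integral_convlike {A : E → ℝ≥0∞} (hA : Measurable A) (hAfin : ∀ z, A z ≠ ⊤)
    {b : E → ℝ} (hb : Measurable b) (hbnn : ∀ y, 0 ≤ b y) (x : E) :
    ∫ y, (A (x - y)).toReal * b y = (∫⁻ y, A (x - y) * ENNReal.ofReal (b y)).toReal := by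
  have hm : Measurable fun y => (A (x - y)).toReal * b y :=
    ((hA.comp (measurable_const_sub x)).ennreal_toReal).mul hb
  rw [integral_eq_lintegral_of_nonneg_ae
      (Filter.Eventually.of_forall fun y => mul_nonneg ENNReal.toReal_nonneg (hbnn y))
      hm.aestronglyMeasurable]
  congr 1
  refine lintegral_congr fun y => ?_
  rw [ENNReal.ofReal_mul ENNReal.toReal_nonneg, ENNReal.ofReal_toReal (hAfin _)]

lemma convIter_eq_toReal {f : E → ℝ} (hmeas : Measurable f) (hnonneg : ∀ y, 0 ≤ f y)
    {C : ℝ} (hC : ∀ y, f y ≤ C) (hfin : (∫⁻ y, ENNReal.ofReal (f y)) < ⊤) (n : ℕ) (x : E) :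
    convIter f n x = (lIter (fun y => ENNReal.ofReal (f y)) n x).toReal := by
  set F : E → ℝ≥0∞ := fun y => ENNReal.ofReal (f y) with hFdef
  have hF : Measurable F := hmeas.ennreal_ofReal
  have hCb : ∀ y, F y ≤ ENNReal.ofReal C := fun y => ENNReal.ofReal_le_ofReal (hC y)
  have hfinF : ∀ m z, lIter F m z ≠ ⊤ := fun m z =>
    ((lIter_le hF hCb m z).trans_lt
      (ENNReal.mul_lt_top ENNReal.ofReal_lt_top (ENNReal.pow_lt_top (n := m) hfin))).ne
  induction n generalizing x with
  | zero =>
    simp [convIter, lIter, hFdef, ENNReal.toReal_ofReal (hnonneg x)]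
  | succ n ih =>
    have : convIter f (n + 1) x = ∫ y, convIter f n (x - y) * f y := rfl
    rw [this]
    have : ∫ y, convIter f n (x - y) * f y = ∫ y, (lIter F n (x - y)).toReal * f y := by
      refine integral_congr_ae (Filter.Eventually.of_forall fun y => ?_)
      simp only [ih]
    rw [this, integral_convlike (lIter_measurable hF n) (hfinF n) hmeas hnonneg x]
    rfl

end ConvPowAux

open ConvPowAux

/-- If `f : ℝ^d → ℝ` is bounded, measurable, nonnegative, symmetric with positive finite
integral, and `g` is bounded, measurable, nonnegative with positive integral, then for every
`x` there is some `n ≥ 1` with `(f^{*n} * g)(x) > 0`. -/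
theorem convPow_conv_pos {d : ℕ} (hd : 1 ≤ d) (f g : EuclideanSpace ℝ (Fin d) → ℝ)
    (hmeas : Measurable f) (hbdd : ∃ C : ℝ, ∀ y, f y ≤ C)
    (hnonneg : ∀ y, 0 ≤ f y)
    (hpos : 0 < ∫⁻ y, ENNReal.ofReal (f y))
    (hfin : (∫⁻ y, ENNReal.ofReal (f y)) < ⊤)
    (hsymm : ∀ y, f (-y) = f y)
    (hgmeas : Measurable g) (hgbdd : ∃ C : ℝ, ∀ y, g y ≤ C)
    (hgnonneg : ∀ y, 0 ≤ g y)
    (hgpos : 0 < ∫⁻ y, ENNReal.ofReal (g y)) :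
    ∀ x : EuclideanSpace ℝ (Fin d), ∃ n : ℕ, 1 ≤ n ∧ 0 < conv (convPow f n) g x := by
  classical
  intro x
  set F : EuclideanSpace ℝ (Fin d) → ℝ≥0∞ := fun y => ENNReal.ofReal (f y) with hFdef
  have hF : Measurable F := hmeas.ennreal_ofReal
  obtain ⟨C, hC⟩ := hbdd
  obtain ⟨Cg, hCg⟩ := hgbdd
  have hCb : ∀ y, F y ≤ ENNReal.ofReal C := fun y => ENNReal.ofReal_le_ofReal (hC y)
  have hfinF : ∀ (k : ℕ) (z : EuclideanSpace ℝ (Fin d)), lIter F k z ≠ ⊤ := fun k z =>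
    ((lIter_le hF hCb k z).trans_lt
      (ENNReal.mul_lt_top ENNReal.ofReal_lt_top (ENNReal.pow_lt_top (n := k) hfin))).ne
  -- the set where f is positive has positive measure
  have hPmeas : MeasurableSet {y : EuclideanSpace ℝ (Fin d) | 0 < f y} := measurableSet_lt measurable_const hmeas
  have hPpos : 0 < volume {y : EuclideanSpace ℝ (Fin d) | 0 < f y} := by
    rw [pos_iff_ne_zero]
    intro h0
    have h1 : ∀ᵐ y ∂(volume : Measure (EuclideanSpace ℝ (Fin d))), F y = 0 := by
      rw [ae_iff]
      have hset : {y : EuclideanSpace ℝ (Fin d) | ¬ F y = 0} = {y : EuclideanSpace ℝ (Fin d) | 0 < f y} := by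
        ext y; simp [hFdef, ENNReal.ofReal_eq_zero, not_le]
      rw [hset]; exact h0
    have : (∫⁻ y, F y) = 0 := by
      calc (∫⁻ y, F y) = ∫⁻ _, (0 : ℝ≥0∞) := lintegral_congr_ae h1
        _ = 0 := lintegral_zero
    exact hpos.ne' this
  -- Steinhaus-type step: a compact subset and translation continuity
  obtain ⟨K, hKP, hKcomp, hKpos⟩ := hPmeas.exists_lt_isCompact hPpos
  have hev := eventually_nhds_zero_measure_vadd_sdiff_lt (μ := (volume : Measure (EuclideanSpace ℝ (Fin d))))
    hKcomp hKcomp.isClosed hKpos.ne'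
  obtain ⟨ε, hε, hball⟩ := Metric.eventually_nhds_iff.mp hev
  -- positivity of f*f near the origin
  have hH : ∀ z : EuclideanSpace ℝ (Fin d), ‖z‖ < ε → 0 < lIter F 1 z := by
    intro z hz
    have h1 : volume ((z +ᵥ K) \ K) < volume K :=
      hball (show dist z 0 < ε by simpa [dist_zero_right] using hz)
    have hover : 0 < volume ((z +ᵥ K) ∩ K) := by
      rw [pos_iff_ne_zero]
      intro h0
      have h2 : volume (z +ᵥ K) ≤ volume ((z +ᵥ K) ∩ K) + volume ((z +ᵥ K) \ K) :=
        measure_le_inter_add_diff _ _ _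
      rw [h0, zero_add, measure_vadd] at h2
      exact absurd (h2.trans_lt h1) (lt_irrefl _)
    rw [lIter_succ]
    refine pos_of_posset ((hF.comp (measurable_const_sub z)).mul hF) hover ?_
    intro y hy
    have hy2 : 0 < f y := hKP hy.2
    have hy1 : 0 < f (z - y) := by
      obtain ⟨k, hk, hk2⟩ := hy.1
      have hk2' : z + k = y := hk2
      have hkeq : y - z = k := by rw [← hk2']; abel
      have : 0 < f (y - z) := hKP (by rw [hkeq]; exact hk)
      rw [show z - y = -(y - z) by abel, hsymm]; exact this
    exact mul_ne_zero (by simp only [hFdef]; exact (ENNReal.ofReal_pos.mpr hy1).ne')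
      (by simp only [hFdef]; exact (ENNReal.ofReal_pos.mpr hy2).ne')
  -- spreading of positivity
  have hspread : ∀ m : ℕ, ∀ z : EuclideanSpace ℝ (Fin d), ‖z‖ < ((m : ℝ) + 1) * ε → 0 < lIter F (2 * m + 1) z := by
    intro m
    induction m with
    | zero => intro z hz; exact hH z (by simpa using hz)
    | succ m ih =>
      intro z hz
      have h21 : 2 * (m + 1) + 1 = (2 * m + 1) + 2 := by ring
      rw [h21, lIter_add_two hF]
      have hm2 : (0:ℝ) < (m : ℝ) + 2 := by positivity
      set c : ℝ := ((m : ℝ) + 2)⁻¹ with hc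
      have hcm : c * ((m : ℝ) + 2) = 1 := inv_mul_cancel₀ hm2.ne'
      have hcpos : (0:ℝ) < c := by rw [hc]; positivity
      have hc1' : (0:ℝ) < 1 - c := by nlinarith
      set z₂ : EuclideanSpace ℝ (Fin d) := c • z with hz₂
      set z₁ : EuclideanSpace ℝ (Fin d) := z - z₂ with hz₁
      have hzn : ‖z‖ < ((m:ℝ) + 2) * ε := by
        push_cast at hz
        linarith [show ((m:ℝ) + 1 + 1) * ε = ((m:ℝ) + 2) * ε from by ring]
      have hnz₂ : ‖z₂‖ = c * ‖z‖ := by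
        rw [hz₂, norm_smul, Real.norm_eq_abs, abs_of_pos hcpos]
      have hnz₂' : ‖z₂‖ < ε := by
        rw [hnz₂]
        calc c * ‖z‖ < c * (((m:ℝ) + 2) * ε) := by
              exact mul_lt_mul_of_pos_left hzn hcpos
          _ = ε := by linear_combination ε * hcm
      have hz₁eq : z₁ = (1 - c) • z := by rw [hz₁, hz₂, sub_smul, one_smul]
      have hnz₁ : ‖z₁‖ < ((m:ℝ) + 1) * ε := by
        rw [hz₁eq, norm_smul, Real.norm_eq_abs, abs_of_pos hc1']
        have h1 : (1 - c) * ‖z‖ < (1 - c) * (((m:ℝ) + 2) * ε) :=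
          mul_lt_mul_of_pos_left hzn hc1'
        have h2 : (1 - c) * (((m:ℝ) + 2) * ε) = ((m:ℝ) + 1) * ε := by
          linear_combination (-ε) * hcm
        linarith
      set δ : ℝ := min (ε - ‖z₂‖) (((m:ℝ) + 1) * ε - ‖z₁‖) with hδdef
      have hδ : 0 < δ := lt_min (by linarith) (by linarith)
      refine pos_of_posset
        (((lIter_measurable hF (2*m+1)).comp (measurable_const_sub z)).mul
          (lIter_measurable hF 1))
        (measure_ball_pos volume z₂ hδ) ?_
      intro u hu
      have hdist : dist u z₂ < δ := mem_ball.mp hu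
      have hnd : ‖u - z₂‖ < δ := by rwa [← dist_eq_norm]
      have hu1 : ‖u‖ < ε := by
        calc ‖u‖ = ‖(u - z₂) + z₂‖ := by rw [sub_add_cancel]
          _ ≤ ‖u - z₂‖ + ‖z₂‖ := norm_add_le _ _
          _ < δ + ‖z₂‖ := by linarith
          _ ≤ ε := by
              have := min_le_left (ε - ‖z₂‖) (((m:ℝ) + 1) * ε - ‖z₁‖)
              rw [← hδdef] at this
              linarith
      have hu2 : ‖z - u‖ < ((m:ℝ) + 1) * ε := by
        calc ‖z - u‖ = ‖z₁ + (z₂ - u)‖ := by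
              have hzu : z - u = z₁ + (z₂ - u) := by rw [hz₁]; abel
              rw [hzu]
          _ ≤ ‖z₁‖ + ‖z₂ - u‖ := norm_add_le _ _
          _ = ‖z₁‖ + ‖u - z₂‖ := by rw [norm_sub_rev z₂ u]
          _ < ‖z₁‖ + δ := by linarith
          _ ≤ ((m:ℝ) + 1) * ε := by
              have := min_le_right (ε - ‖z₂‖) (((m:ℝ) + 1) * ε - ‖z₁‖)
              rw [← hδdef] at this
              linarith
      exact mul_ne_zero (ih (z - u) hu2).ne' (hH u hu1).ne'
  -- the set where g is positive has positive measure
  have hQpos : 0 < volume {y : EuclideanSpace ℝ (Fin d) | 0 < g y} := by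
    rw [pos_iff_ne_zero]
    intro h0
    have h1 : ∀ᵐ y ∂(volume : Measure (EuclideanSpace ℝ (Fin d))), ENNReal.ofReal (g y) = 0 := by
      rw [ae_iff]
      have hset : {y : EuclideanSpace ℝ (Fin d) | ¬ ENNReal.ofReal (g y) = 0} = {y : EuclideanSpace ℝ (Fin d) | 0 < g y} := by
        ext y; simp [ENNReal.ofReal_eq_zero, not_le]
      rw [hset]; exact h0
    have : (∫⁻ y, ENNReal.ofReal (g y)) = 0 := by
      calc (∫⁻ y, ENNReal.ofReal (g y)) = ∫⁻ _, (0 : ℝ≥0∞) := lintegral_congr_ae h1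
        _ = 0 := lintegral_zero
    exact hgpos.ne' this
  -- a bounded piece of {g > 0} with positive measure
  obtain ⟨N, hN⟩ : ∃ N : ℕ, 0 < volume ({y : EuclideanSpace ℝ (Fin d) | 0 < g y} ∩ Metric.ball 0 (N:ℝ)) := by
    by_contra h
    push_neg at h
    have hsub : {y : EuclideanSpace ℝ (Fin d) | 0 < g y} ⊆ ⋃ N : ℕ, ({y : EuclideanSpace ℝ (Fin d) | 0 < g y} ∩ Metric.ball 0 (N:ℝ)) := by
      intro y hy
      obtain ⟨N, hNy⟩ := exists_nat_gt ‖y‖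
      exact Set.mem_iUnion.mpr ⟨N, hy, by simpa [mem_ball, dist_zero_right] using hNy⟩
    have : volume {y : EuclideanSpace ℝ (Fin d) | 0 < g y} = 0 :=
      measure_mono_null hsub
        (measure_iUnion_null fun N => le_antisymm (h N) zero_le)
    exact hQpos.ne' this
  -- choose m large enough
  obtain ⟨m, hm⟩ : ∃ m : ℕ, ‖x‖ + N < ((m:ℝ) + 1) * ε := by
    obtain ⟨m, hm⟩ := exists_nat_gt ((‖x‖ + N) / ε)
    refine ⟨m, ?_⟩
    rw [div_lt_iff₀ hε] at hm
    nlinarith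
  refine ⟨2 * m + 2, by omega, ?_⟩
  have h1 : convPow f (2*m+2) = convIter f (2*m+1) := by
    unfold convPow; congr 1
  have hkey : conv (convPow f (2*m+2)) g x
      = (∫⁻ y, lIter F (2*m+1) (x - y) * ENNReal.ofReal (g y)).toReal := by
    rw [h1]
    calc conv (convIter f (2*m+1)) g x
        = ∫ y, convIter f (2*m+1) (x - y) * g y := rfl
      _ = ∫ y, (lIter F (2*m+1) (x - y)).toReal * g y := by
          refine integral_congr_ae (Filter.Eventually.of_forall fun y => ?_)
          simp only [convIter_eq_toReal hmeas hnonneg hC hfin]; rfl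
      _ = (∫⁻ y, lIter F (2*m+1) (x - y) * ENNReal.ofReal (g y)).toReal :=
          integral_convlike (lIter_measurable hF _) (hfinF _) hgmeas hgnonneg x
  rw [hkey]
  have hJtop : (∫⁻ y, lIter F (2*m+1) (x - y) * ENNReal.ofReal (g y)) ≠ ⊤ := by
    have hmm : Measurable fun y => lIter F (2*m+1) (x - y) :=
      (lIter_measurable hF _).comp (measurable_const_sub x)
    have hb : (∫⁻ y, lIter F (2*m+1) (x - y) * ENNReal.ofReal (g y))
        ≤ ∫⁻ y, lIter F (2*m+1) (x - y) * ENNReal.ofReal Cg :=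
      lintegral_mono fun y => mul_le_mul' le_rfl (ENNReal.ofReal_le_ofReal (hCg y))
    rw [lintegral_mul_const _ hmm, lintegral_comp_sub (lIter_measurable hF _) x,
      lintegral_lIter hF] at hb
    exact (hb.trans_lt
      (ENNReal.mul_lt_top (ENNReal.pow_lt_top hfin) ENNReal.ofReal_lt_top)).ne
  have hJpos : 0 < ∫⁻ y, lIter F (2*m+1) (x - y) * ENNReal.ofReal (g y) := by
    refine pos_of_posset
      (((lIter_measurable hF _).comp (measurable_const_sub x)).mul hgmeas.ennreal_ofReal)
      hN ?_
    intro y hy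
    have hgy : 0 < g y := hy.1
    have hyN : ‖y‖ < (N:ℝ) := by simpa [mem_ball, dist_zero_right] using hy.2
    have hxy : ‖x - y‖ < ((m:ℝ) + 1) * ε := by
      calc ‖x - y‖ ≤ ‖x‖ + ‖y‖ := norm_sub_le x y
        _ < ‖x‖ + N := by linarith
        _ < _ := hm
    exact mul_ne_zero (hspread m (x - y) hxy).ne' (ENNReal.ofReal_pos.mpr hgy).ne'
  exact ENNReal.toReal_pos hJpos.ne' hJtop
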